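/- Consider a purely dissipative Lindblad generator (H = 0) with dark-state subspace D = ∩_ℓ ker(c_ℓ). If there is no nonzero subspace S orthogonal to D that is invariant under every jump operator (i.e., c_ℓ S ⊆ S for all ℓ), then every stationary density operator ρ (L(ρ) = 0) has range contained in D. -/

import Mathlib

open Matrix
open scoped ComplexOrder

/-- The purely dissipative Lindblad generator. -/
noncomputable def dissipator {n m : ℕ} (g : Fin m → ℝ)
    (c : Fin m → Matrix (Fin n) (Fin n) ℂ) (ρ : Matrix (Fin n) (Fin n) ℂ) :
    Matrix (Fin n) (Fin n) ℂ :=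
  ∑ l, (g l : ℂ) •
    (2 • (c l * ρ * (c l)ᴴ) - (c l)ᴴ * c l * ρ - ρ * ((c l)ᴴ * c l))


lemma dp_flip {n : ℕ} (M : Matrix (Fin n) (Fin n) ℂ) (w v : Fin n → ℂ) :
    star w ⬝ᵥ (M *ᵥ v) = star (Mᴴ *ᵥ w) ⬝ᵥ v := by
  rw [star_mulVec, conjTranspose_conjTranspose, dotProduct_mulVec]

lemma psd_form_zero {n : ℕ} {ρ : Matrix (Fin n) (Fin n) ℂ} (hρ : ρ.PosSemidef)
    (u : Fin n → ℂ) (h : star u ⬝ᵥ (ρ *ᵥ u) = 0) : ρ *ᵥ u = 0 := by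
  exact (hρ.dotProduct_mulVec_zero_iff u).mp h

lemma sum_mulVec' {n N : ℕ} (A : Fin N → Matrix (Fin n) (Fin n) ℂ) (v : Fin n → ℂ) :
    (∑ i, A i) *ᵥ v = ∑ i, A i *ᵥ v := by
  ext j
  simp [mulVec, dotProduct, Matrix.sum_apply, Finset.sum_mul]
  rw [Finset.sum_comm]

lemma dotProduct_sum' {n N : ℕ} (w : Fin n → ℂ) (x : Fin N → Fin n → ℂ) :
    w ⬝ᵥ (∑ i, x i) = ∑ i, w ⬝ᵥ x i := by
  simp [dotProduct, Finset.mul_sum, Finset.sum_apply]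
  rw [Finset.sum_comm]

/-- Key analytic lemma: if `w` is in the kernel of `ρ`, or a dark state,
then `ρ (c l)ᴴ w = 0` for all `l`. -/
lemma key_lemma {n m : ℕ} (g : Fin m → ℝ) (hg : ∀ l, 0 < g l)
    (c : Fin m → Matrix (Fin n) (Fin n) ℂ) (ρ : Matrix (Fin n) (Fin n) ℂ)
    (hρ : ρ.PosSemidef) (hst : dissipator g c ρ = 0)
    (w : Fin n → ℂ) (hw : ρ *ᵥ w = 0 ∨ ∀ l, c l *ᵥ w = 0) :
    ∀ l, ρ *ᵥ ((c l)ᴴ *ᵥ w) = 0 := by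
  have h0 : star w ⬝ᵥ (dissipator g c ρ *ᵥ w) = 0 := by rw [hst]; simp
  -- the cross terms vanish
  have hS1 : ∀ l, star w ⬝ᵥ (((c l)ᴴ * c l * ρ) *ᵥ w) = 0 := by
    intro l
    rcases hw with hker | hdark
    · rw [← mulVec_mulVec, hker, mulVec_zero, dotProduct_zero]
    · rw [mul_assoc, ← mulVec_mulVec, dp_flip, conjTranspose_conjTranspose,
        hdark l]
      simp
  have hS2 : ∀ l, star w ⬝ᵥ ((ρ * ((c l)ᴴ * c l)) *ᵥ w) = 0 := by
    intro l
    rcases hw with hker | hdark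
    · rw [dp_flip]
      rw [conjTranspose_mul, hρ.1.eq, conjTranspose_mul, conjTranspose_conjTranspose,
        ← mulVec_mulVec, hker, mulVec_zero]
      simp
    · rw [← mulVec_mulVec, ← mulVec_mulVec, hdark l, mulVec_zero, mulVec_zero,
        dotProduct_zero]
  have hT : ∀ l, star w ⬝ᵥ ((c l * ρ * (c l)ᴴ) *ᵥ w)
      = star ((c l)ᴴ *ᵥ w) ⬝ᵥ (ρ *ᵥ ((c l)ᴴ *ᵥ w)) := by
    intro l
    rw [mul_assoc, ← mulVec_mulVec, dp_flip (c l), ← mulVec_mulVec]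
  -- expand the stationarity equation
  set q : Fin m → ℂ := fun l => star ((c l)ᴴ *ᵥ w) ⬝ᵥ (ρ *ᵥ ((c l)ᴴ *ᵥ w)) with hq
  have hexp : ∑ l, (g l : ℂ) * (2 * q l) = 0 := by
    rw [← h0]
    unfold dissipator
    rw [sum_mulVec', dotProduct_sum']
    refine Finset.sum_congr rfl fun l _ => ?_
    rw [smul_mulVec, dotProduct_smul, sub_mulVec, sub_mulVec, dotProduct_sub,
      dotProduct_sub, hS1 l, hS2 l, two_smul, add_mulVec, dotProduct_add, hT l]
    ring_nf
    simp [hq, smul_eq_mul]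
  have hnonneg : ∀ l ∈ Finset.univ, 0 ≤ (g l : ℂ) * (2 * q l) := by
    intro l _
    have h1 : (0:ℂ) ≤ q l := hρ.dotProduct_mulVec_nonneg _
    have h2 : (0:ℂ) ≤ (g l : ℂ) := by
      rw [Complex.zero_le_real]; exact (hg l).le
    exact mul_nonneg h2 (mul_nonneg (by norm_num) h1)
  have hzero := (Finset.sum_eq_zero_iff_of_nonneg hnonneg).mp hexp
  intro l
  have := hzero l (Finset.mem_univ l)
  have hql : q l = 0 := by
    have hgl : (g l : ℂ) ≠ 0 := by
      simp only [ne_eq, Complex.ofReal_eq_zero]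
      exact (hg l).ne'
    have h2 := (mul_eq_zero.mp this).resolve_left hgl
    exact (mul_eq_zero.mp h2).resolve_left two_ne_zero
  exact psd_form_zero hρ _ hql

/-- If there is no nonzero subspace `S`, orthogonal to the dark-state space
`D = ∩_ℓ ker c_ℓ`, that is invariant under every jump operator, then every stationary
density operator has range contained in `D`. -/
theorem stationary_range_subset_dark {n m : ℕ} (g : Fin m → ℝ) (hg : ∀ l, 0 < g l)
    (c : Fin m → Matrix (Fin n) (Fin n) ℂ)
    (hno : ¬ ∃ S : Submodule ℂ (Fin n → ℂ), S ≠ ⊥ ∧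
        (∀ v ∈ S, ∀ w : Fin n → ℂ, (∀ l, c l *ᵥ w = 0) → star w ⬝ᵥ v = 0) ∧
        (∀ l, ∀ v ∈ S, c l *ᵥ v ∈ S))
    (ρ : Matrix (Fin n) (Fin n) ℂ) (hρ : ρ.PosSemidef) (hρ1 : ρ.trace = 1)
    (hst : dissipator g c ρ = 0) :
    ∀ v : Fin n → ℂ, ∀ l, c l *ᵥ (ρ *ᵥ v) = 0 := by
  have key := key_lemma g hg c ρ hρ hst
  set S : Submodule ℂ (Fin n → ℂ) :=
    { carrier := {v | (∀ w, ρ *ᵥ w = 0 → star w ⬝ᵥ v = 0) ∧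
        (∀ w, (∀ l, c l *ᵥ w = 0) → star w ⬝ᵥ v = 0)}
      add_mem' := by
        rintro a b ⟨ha1, ha2⟩ ⟨hb1, hb2⟩
        refine ⟨fun w hw => ?_, fun w hw => ?_⟩
        · rw [dotProduct_add, ha1 w hw, hb1 w hw, add_zero]
        · rw [dotProduct_add, ha2 w hw, hb2 w hw, add_zero]
      zero_mem' := by
        refine ⟨fun w _ => ?_, fun w _ => ?_⟩ <;> simp
      smul_mem' := by
        rintro r a ⟨ha1, ha2⟩
        refine ⟨fun w hw => ?_, fun w hw => ?_⟩
        · rw [dotProduct_smul, ha1 w hw, smul_zero]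
        · rw [dotProduct_smul, ha2 w hw, smul_zero] } with hSdef
  have hinv : ∀ l, ∀ v ∈ S, c l *ᵥ v ∈ S := by
    intro l v hv
    refine ⟨fun w hw => ?_, fun w hw => ?_⟩
    · rw [dp_flip]
      exact hv.1 _ (key w (Or.inl hw) l)
    · rw [dp_flip]
      exact hv.1 _ (key w (Or.inr hw) l)
  have hSbot : S = ⊥ := by
    by_contra hS
    exact hno ⟨S, hS, fun v hv w hw => hv.2 w hw, hinv⟩
  intro v l
  have hmem : c l *ᵥ (ρ *ᵥ v) ∈ S := by
    refine ⟨fun w hw => ?_, fun w hw => ?_⟩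
    · rw [dp_flip, dp_flip, hρ.1.eq, key w (Or.inl hw) l]
      simp
    · rw [dp_flip, dp_flip, hρ.1.eq, key w (Or.inr hw) l]
      simp
  rw [hSbot] at hmem
  exact (Submodule.mem_bot ℂ).mp hmem
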